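/- In the universe D of dicot games, {0, * | *} ≥ 0 (mod D): for every dicot game X, o⁻({0,* | *} + X) ≥ o⁻(X). Nevertheless {0,* | *} is not a Left end, so this exhibits failure, in the restricted universe D, of the general misère lemma that a non-Left-end cannot be ≥ a Left end. -/

import Mathlib

namespace SetTheory

universe u

/-- Pre-games, as in the older Mathlib (`Mathlib.SetTheory.Game.PGame`), which has since been removed. -/
inductive PGame : Type (u + 1)
  | mk : ∀ α β : Type u, (α → PGame) → (β → PGame) → PGame

namespace PGame

/-- The indexing type for allowable moves by Left. -/
def LeftMoves : PGame → Type u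
  | mk l _ _ _ => l

/-- The indexing type for allowable moves by Right. -/
def RightMoves : PGame → Type u
  | mk _ r _ _ => r

/-- The new game after Left makes an allowed move. -/
def moveLeft : ∀ g : PGame, LeftMoves g → PGame
  | mk _l _ L _ => L

/-- The new game after Right makes an allowed move. -/
def moveRight : ∀ g : PGame, RightMoves g → PGame
  | mk _ _r _ R => R

/-- `IsOption x y` means that `x` is either a left or right option for `y`. -/
inductive IsOption : PGame → PGame → Prop
  | moveLeft {x : PGame} (i : x.LeftMoves) : IsOption (x.moveLeft i) x
  | moveRight {x : PGame} (i : x.RightMoves) : IsOption (x.moveRight i) x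

/-- `Subsequent x y` says that `x` can be obtained by playing some nonempty sequence of moves
from `y`. -/
def Subsequent : PGame → PGame → Prop :=
  Relation.TransGen IsOption

/-- The pre-game `Zero` is defined by `0 = { | }`. -/
instance : Zero PGame :=
  ⟨⟨PEmpty, PEmpty, PEmpty.elim, PEmpty.elim⟩⟩

/-- The pre-game `star`, which is fuzzy with zero. -/
def star : PGame.{u} :=
  ⟨PUnit, PUnit, fun _ => 0, fun _ => 0⟩

/-- The sum of `x = {xL | xR}` and `y = {yL | yR}` is `{xL + y, x + yL | xR + y, x + yR}`. -/
noncomputable instance : Add PGame.{u} :=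
  ⟨fun x y => by
    induction x generalizing y with | mk xl xr _ _ IHxl IHxr => _
    induction y with | mk yl yr yL yR IHyl IHyr => _
    have y := mk yl yr yL yR
    refine ⟨xl ⊕ yl, xr ⊕ yr, Sum.rec ?_ ?_, Sum.rec ?_ ?_⟩
    · exact fun i => IHxl i y
    · exact IHyl
    · exact fun i => IHxr i y
    · exact IHyr⟩

end PGame

end SetTheory

open SetTheory

namespace Misere

/-- Misère winning: `(wins G).1` means Left, moving first on `G`, wins under misère play;
`(wins G).2` means Right, moving first, wins. The player unable to move wins. -/
def wins : PGame → Prop × Prop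
  | ⟨α, β, L, R⟩ =>
    (IsEmpty α ∨ ∃ i, ¬ (wins (L i)).2,
     IsEmpty β ∨ ∃ j, ¬ (wins (R j)).1)

/-- Left wins moving first under misère play. -/
def LeftFirst (G : PGame) : Prop := (wins G).1

/-- Right wins moving first under misère play. -/
def RightFirst (G : PGame) : Prop := (wins G).2

/-- Normal-play winning: `(nwins G).1` means Left moving first wins (player unable to move loses). -/
def nwins : PGame → Prop × Prop
  | ⟨α, β, L, R⟩ =>
    (∃ i, ¬ (nwins (L i)).2,
     ∃ j, ¬ (nwins (R j)).1)

/-- Outcome classes. -/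
inductive Outcome : Type
  | L | R | N | P
  deriving DecidableEq

/-- The partial order on outcomes: L > P > R, L > N > R, with P and N incomparable. -/
instance : LE Outcome := ⟨fun a b => a = b ∨ a = .R ∨ b = .L⟩

open Classical in
/-- The misère outcome of a game. -/
noncomputable def misereOutcome (G : PGame) : Outcome :=
  if (wins G).1 then (if (wins G).2 then .N else .L)
  else (if (wins G).2 then .R else .P)

open Classical in
/-- The normal-play outcome of a game. -/
noncomputable def normalOutcome (G : PGame) : Outcome :=
  if (nwins G).1 then (if (nwins G).2 then .N else .L)
  else (if (nwins G).2 then .R else .P)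

/-- A game is dicot if every subposition has a Left option iff it has a Right option. -/
def Dicot : PGame → Prop
  | ⟨α, β, L, R⟩ => (IsEmpty α ↔ IsEmpty β) ∧ (∀ i, Dicot (L i)) ∧ (∀ j, Dicot (R j))

/-- A dead Left end: a Left end all of whose followers are Left ends. -/
def DeadLeftEnd : PGame → Prop
  | ⟨α, _β, _L, R⟩ => IsEmpty α ∧ ∀ j, DeadLeftEnd (R j)

/-- A dead Right end: a Right end all of whose followers are Right ends. -/
def DeadRightEnd : PGame → Prop
  | ⟨_α, β, L, _R⟩ => IsEmpty β ∧ ∀ i, DeadRightEnd (L i)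

/-- A follower of `G` is any position reachable from `G`, including `G` itself. -/
def Follower (H G : PGame) : Prop := H = G ∨ PGame.Subsequent H G

/-- An end: a position where some player has no move. -/
def IsEnd (G : PGame) : Prop := IsEmpty G.LeftMoves ∨ IsEmpty G.RightMoves

/-- A game is dead-ending if every one of its end followers is a dead end. -/
def DeadEnding (G : PGame) : Prop :=
  ∀ H, Follower H G → IsEnd H → (DeadLeftEnd H ∨ DeadRightEnd H)

end Misere

namespace Misere

/-- The game `{0, * | *}`. -/
def gZS : PGame := PGame.mk Bool PUnit (fun b => if b then PGame.star else 0)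
  (fun _ => PGame.star)

end Misere

namespace SetTheory.PGame

instance isEmpty_zero_leftMoves' : IsEmpty (LeftMoves 0) := ⟨PEmpty.elim⟩

instance isEmpty_zero_rightMoves' : IsEmpty (RightMoves 0) := ⟨PEmpty.elim⟩

noncomputable def moveRecOn {C : PGame → Sort*} (x : PGame)
    (IH : ∀ y : PGame, (∀ i, C (y.moveLeft i)) → (∀ j, C (y.moveRight j)) → C y) : C x :=
  PGame.rec (motive := C) (fun yl yr yL yR ihl ihr => IH (mk yl yr yL yR) ihl ihr) x

theorem leftMoves_add : ∀ x y : PGame, (x + y).LeftMoves = (x.LeftMoves ⊕ y.LeftMoves)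
  | ⟨_, _, _, _⟩, ⟨_, _, _, _⟩ => rfl

theorem rightMoves_add : ∀ x y : PGame, (x + y).RightMoves = (x.RightMoves ⊕ y.RightMoves)
  | ⟨_, _, _, _⟩, ⟨_, _, _, _⟩ => rfl

def toLeftMovesAdd {x y : PGame} : x.LeftMoves ⊕ y.LeftMoves ≃ (x + y).LeftMoves :=
  Equiv.cast (leftMoves_add x y).symm

def toRightMovesAdd {x y : PGame} : x.RightMoves ⊕ y.RightMoves ≃ (x + y).RightMoves :=
  Equiv.cast (rightMoves_add x y).symm

theorem add_moveLeft_inl {x : PGame} (y : PGame) (i) :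
    (x + y).moveLeft (toLeftMovesAdd (Sum.inl i)) = x.moveLeft i + y := by
  cases x; cases y; rfl

theorem add_moveRight_inl {x : PGame} (y : PGame) (i) :
    (x + y).moveRight (toRightMovesAdd (Sum.inl i)) = x.moveRight i + y := by
  cases x; cases y; rfl

theorem add_moveLeft_inr (x : PGame) {y : PGame} (i) :
    (x + y).moveLeft (toLeftMovesAdd (Sum.inr i)) = x + y.moveLeft i := by
  cases x; cases y; rfl

theorem add_moveRight_inr (x : PGame) {y : PGame} (i) :
    (x + y).moveRight (toRightMovesAdd (Sum.inr i)) = x + y.moveRight i := by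
  cases x; cases y; rfl

end SetTheory.PGame

namespace Misere

open PGame

private lemma wins_fst (G : PGame) :
    (wins G).1 ↔ (IsEmpty G.LeftMoves ∨ ∃ i, ¬ (wins (G.moveLeft i)).2) := by
  cases G; rw [wins]; exact Iff.rfl

private lemma wins_snd (G : PGame) :
    (wins G).2 ↔ (IsEmpty G.RightMoves ∨ ∃ j, ¬ (wins (G.moveRight j)).1) := by
  cases G; rw [wins]; exact Iff.rfl

private lemma dicot_iff (X : PGame) : Dicot X ↔
    ((IsEmpty X.LeftMoves ↔ IsEmpty X.RightMoves) ∧ (∀ i, Dicot (X.moveLeft i)) ∧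
      ∀ j, Dicot (X.moveRight j)) := by
  cases X; rw [Dicot]; exact Iff.rfl

private lemma exists_leftMoves_add {x y : PGame} {P : (x + y).LeftMoves → Prop} :
    (∃ k, P k) ↔ (∃ i, P (toLeftMovesAdd (Sum.inl i))) ∨ ∃ i, P (toLeftMovesAdd (Sum.inr i)) := by
  constructor
  · rintro ⟨k, hk⟩
    obtain ⟨s, rfl⟩ := toLeftMovesAdd.surjective k
    rcases s with i | i
    · exact Or.inl ⟨i, hk⟩
    · exact Or.inr ⟨i, hk⟩
  · rintro (⟨i, hi⟩ | ⟨i, hi⟩) <;> exact ⟨_, hi⟩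

private lemma exists_rightMoves_add {x y : PGame} {P : (x + y).RightMoves → Prop} :
    (∃ k, P k) ↔ (∃ j, P (toRightMovesAdd (Sum.inl j))) ∨ ∃ j, P (toRightMovesAdd (Sum.inr j)) := by
  constructor
  · rintro ⟨k, hk⟩
    obtain ⟨s, rfl⟩ := toRightMovesAdd.surjective k
    rcases s with j | j
    · exact Or.inl ⟨j, hk⟩
    · exact Or.inr ⟨j, hk⟩
  · rintro (⟨j, hj⟩ | ⟨j, hj⟩) <;> exact ⟨_, hj⟩

private lemma isEmpty_leftMoves_add_iff {x y : PGame} :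
    IsEmpty (x + y).LeftMoves ↔ IsEmpty x.LeftMoves ∧ IsEmpty y.LeftMoves := by
  rw [leftMoves_add, isEmpty_sum]

private lemma isEmpty_rightMoves_add_iff {x y : PGame} :
    IsEmpty (x + y).RightMoves ↔ IsEmpty x.RightMoves ∧ IsEmpty y.RightMoves := by
  rw [rightMoves_add, isEmpty_sum]

private lemma wins_zero_add : ∀ X : PGame,
    ((wins (0 + X)).1 ↔ (wins X).1) ∧ ((wins (0 + X)).2 ↔ (wins X).2) := by
  intro X
  induction X using PGame.moveRecOn with
  | IH X ihl ihr =>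
    constructor
    · rw [wins_fst (0 + X), wins_fst X]
      constructor
      · rintro (he | h)
        · exact Or.inl (isEmpty_leftMoves_add_iff.1 he).2
        · rcases exists_leftMoves_add.1 h with ⟨i, hi⟩ | ⟨i, hi⟩
          · exact isEmptyElim i
          · rw [add_moveLeft_inr] at hi
            exact Or.inr ⟨i, fun h' => hi ((ihl i).2.2 h')⟩
      · rintro (he | ⟨i, hi⟩)
        · exact Or.inl (isEmpty_leftMoves_add_iff.2 ⟨inferInstance, he⟩)
        · refine Or.inr ⟨toLeftMovesAdd (Sum.inr i), ?_⟩
          rw [add_moveLeft_inr]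
          exact fun h' => hi ((ihl i).2.1 h')
    · rw [wins_snd (0 + X), wins_snd X]
      constructor
      · rintro (he | h)
        · exact Or.inl (isEmpty_rightMoves_add_iff.1 he).2
        · rcases exists_rightMoves_add.1 h with ⟨j, hj⟩ | ⟨j, hj⟩
          · exact isEmptyElim j
          · rw [add_moveRight_inr] at hj
            exact Or.inr ⟨j, fun h' => hj ((ihr j).1.2 h')⟩
      · rintro (he | ⟨j, hj⟩)
        · exact Or.inl (isEmpty_rightMoves_add_iff.2 ⟨inferInstance, he⟩)
        · refine Or.inr ⟨toRightMovesAdd (Sum.inr j), ?_⟩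
          rw [add_moveRight_inr]
          exact fun h' => hj ((ihr j).1.1 h')

private lemma key : ∀ X : PGame, Dicot X →
    ((wins X).1 → (wins (gZS + X)).1) ∧ ((wins (gZS + X)).2 → (wins X).2) := by
  intro X
  induction X using PGame.moveRecOn with
  | IH X ihl ihr =>
    intro hd
    obtain ⟨hdend, hdl, hdr⟩ := (dicot_iff X).1 hd
    constructor
    · intro hX
      rw [wins_fst] at hX
      rw [wins_fst]
      refine Or.inr ?_
      rcases hX with hemp | ⟨i, hi⟩
      · -- X is an end: move gZS → star
        refine ⟨toLeftMovesAdd (Sum.inl true), ?_⟩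
        erw [add_moveLeft_inl]
        have hs : gZS.moveLeft true = PGame.star := rfl
        rw [hs, wins_snd]
        rintro (he | h)
        · exact (isEmpty_rightMoves_add_iff.1 he).1.false PUnit.unit
        · rcases exists_rightMoves_add.1 h with ⟨j, hj⟩ | ⟨j, hj⟩
          · rw [add_moveRight_inl] at hj
            have hz : PGame.star.moveRight j = 0 := rfl
            rw [hz] at hj
            exact hj ((wins_zero_add X).1.2 ((wins_fst X).2 (Or.inl hemp)))
          · exact ((hdend.1 hemp).false j)
      · -- respond in the X component
        refine ⟨toLeftMovesAdd (Sum.inr i), ?_⟩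
        rw [add_moveLeft_inr]
        exact fun h => hi ((ihl i (hdl i)).2 h)
    · intro hR
      rw [wins_snd] at hR
      rcases hR with hemp | h
      · exact ((isEmpty_rightMoves_add_iff.1 hemp).1.false PUnit.unit).elim
      · rcases exists_rightMoves_add.1 h with ⟨j, hj⟩ | ⟨j, hj⟩
        · -- Right moved gZS → star
          rw [add_moveRight_inl] at hj
          have hs : gZS.moveRight j = PGame.star := rfl
          rw [hs] at hj
          by_contra hnr
          apply hj
          rw [wins_fst]
          refine Or.inr ⟨toLeftMovesAdd (Sum.inl PUnit.unit), ?_⟩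
          erw [add_moveLeft_inl]
          have hz : PGame.star.moveLeft PUnit.unit = 0 := rfl
          rw [hz]
          exact fun h' => hnr ((wins_zero_add X).2.1 h')
        · rw [add_moveRight_inr] at hj
          rw [wins_snd]
          exact Or.inr ⟨j, fun h' => hj ((ihr j (hdr j)).1 h')⟩

/-- `{0, * | *} ≥ 0` modulo the universe of dicot games, even though
`{0,*|*}` is not a Left end. -/
theorem ge_zero_mod_dicot :
    (∀ X : PGame, Dicot X → misereOutcome X ≤ misereOutcome (gZS + X)) ∧
      Nonempty gZS.LeftMoves := by
  refine ⟨fun X hX => ?_, ⟨(true : Bool)⟩⟩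
  obtain ⟨h1, h2⟩ := key X hX
  unfold misereOutcome
  split_ifs with a b c d <;>
    first
      | exact Or.inl rfl
      | exact Or.inr (Or.inl rfl)
      | exact Or.inr (Or.inr rfl)
      | exact absurd (h1 ‹_›) ‹_›
      | exact absurd (h2 ‹_›) ‹_›

end Misere
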